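/- Let M be symmetric positive definite, s nonzero, l = M s, and H symmetric with H ⪯ M^{-1}. For any v ∈ R^n written as v = c·l + z with ⟨s,z⟩ = 0, the BFGS inverse update H_next satisfies v^T H_next v = c^2 l^T M^{-1} l + z^T H z. -/

import Mathlib

open Matrix

noncomputable def bfgsUpdate {n : ℕ} (H : Matrix (Fin n) (Fin n) ℝ)
    (s l : Fin n → ℝ) : Matrix (Fin n) (Fin n) ℝ :=
  (1 - (s ⬝ᵥ l)⁻¹ • Matrix.vecMulVec s l) * H * (1 - (s ⬝ᵥ l)⁻¹ • Matrix.vecMulVec l s)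
    + (s ⬝ᵥ l)⁻¹ • Matrix.vecMulVec s s

lemma vecMulVec_mulVec' {n : ℕ} (a b v : Fin n → ℝ) :
    (Matrix.vecMulVec a b) *ᵥ v = (b ⬝ᵥ v) • a := by
  funext i
  simp [Matrix.mulVec, Matrix.vecMulVec_apply, dotProduct, Finset.mul_sum, Finset.sum_mul]
  apply Finset.sum_congr rfl
  intros; ring

lemma vecMul_smulMat {n : ℕ} (a : ℝ) (A : Matrix (Fin n) (Fin n) ℝ) (v : Fin n → ℝ) :
    v ᵥ* (a • A) = a • (v ᵥ* A) := by
  funext j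
  simp [Matrix.vecMul, dotProduct, Finset.mul_sum]
  apply Finset.sum_congr rfl
  intros; ring

lemma vecMul_vecMulVec' {n : ℕ} (a b v : Fin n → ℝ) :
    v ᵥ* (Matrix.vecMulVec a b) = (v ⬝ᵥ a) • b := by
  funext j
  simp [Matrix.vecMul, Matrix.vecMulVec_apply, dotProduct, Finset.sum_mul, mul_assoc]

theorem stmt_19 {n : ℕ} (M : Matrix (Fin n) (Fin n) ℝ) (hM : M.PosDef)
    (s : Fin n → ℝ) (hs : s ≠ 0) (l : Fin n → ℝ) (hl : l = M.mulVec s)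
    (H : Matrix (Fin n) (Fin n) ℝ) (hH : H.IsSymm)
    (hHM : (M⁻¹ - H).PosSemidef)
    (c : ℝ) (z : Fin n → ℝ) (hz : s ⬝ᵥ z = 0)
    (v : Fin n → ℝ) (hv : v = c • l + z) :
    v ⬝ᵥ (bfgsUpdate H s l).mulVec v =
      c ^ 2 * (l ⬝ᵥ M⁻¹.mulVec l) + z ⬝ᵥ H.mulVec z := by
  set t : ℝ := s ⬝ᵥ l with htdef
  have ht : 0 < t := by
    rw [htdef, hl]; exact hM.dotProduct_mulVec_pos hs
  have ht0 : t ≠ 0 := ne_of_gt ht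
  have hsv : s ⬝ᵥ v = c * t := by
    rw [hv]; simp [dotProduct_add, dotProduct_smul, hz, htdef, mul_comm]
  have hvs : v ⬝ᵥ s = c * t := by rw [dotProduct_comm]; exact hsv
  have hMl : M⁻¹ *ᵥ l = s := by
    rw [hl, Matrix.mulVec_mulVec, Matrix.nonsing_inv_mul M hM.det_pos.ne'.isUnit, Matrix.one_mulVec]
  have hlMl : l ⬝ᵥ M⁻¹ *ᵥ l = t := by
    rw [hMl, dotProduct_comm]
  have hB : (1 - t⁻¹ • Matrix.vecMulVec l s) *ᵥ v = z := by
    rw [Matrix.sub_mulVec, Matrix.smul_mulVec, vecMulVec_mulVec', hsv,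
      Matrix.one_mulVec, hv]
    rw [smul_smul, inv_mul_eq_div, mul_div_assoc, div_self ht0, mul_one]
    abel
  have hA : v ᵥ* (1 - t⁻¹ • Matrix.vecMulVec s l) = z := by
    rw [Matrix.vecMul_sub, vecMul_smulMat, vecMul_vecMulVec', hvs,
      Matrix.vecMul_one, hv]
    rw [smul_smul, inv_mul_eq_div, mul_div_assoc, div_self ht0, mul_one]
    abel
  rw [bfgsUpdate, ← htdef, Matrix.add_mulVec, dotProduct_add]
  have h1 : v ⬝ᵥ ((1 - t⁻¹ • Matrix.vecMulVec s l) * H * (1 - t⁻¹ • Matrix.vecMulVec l s)) *ᵥ v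
      = z ⬝ᵥ H *ᵥ z := by
    rw [← Matrix.mulVec_mulVec, ← Matrix.mulVec_mulVec, hB, Matrix.dotProduct_mulVec, hA]
  have h2 : v ⬝ᵥ (t⁻¹ • Matrix.vecMulVec s s) *ᵥ v = c ^ 2 * t := by
    rw [Matrix.smul_mulVec, vecMulVec_mulVec', hsv, dotProduct_smul, dotProduct_smul,
      hvs]
    field_simp
    rw [smul_eq_mul, smul_eq_mul, one_div, ← mul_assoc, ← mul_assoc t⁻¹ t c, inv_mul_cancel₀ ht0, one_mul]
    ring
  rw [h1, h2, hlMl]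
  ring
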